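/- Let η_A be an m_A×m_A Hermitian positive-definite complex matrix and η_B an m_B×m_B Hermitian positive-definite complex matrix, with m_A ≥ 2 and m_B ≥ 2, and set η = η_A ⊗ η_B (Kronecker product). Then there exist an m_A×m_A matrix O_A and an m_B×m_B matrix O_B, neither of which is a scalar multiple of the identity, such that η · (O_A ⊗ 1) = (O_A ⊗ 1)ᴴ · η and η · (1 ⊗ O_B) = (1 ⊗ O_B)ᴴ · η. -/

import Mathlib

open scoped ComplexOrder Matrix Kronecker

open Matrix

lemma kron_conjT {m n p q : ℕ} (A : Matrix (Fin m) (Fin n) ℂ)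
    (B : Matrix (Fin p) (Fin q) ℂ) : (A ⊗ₖ B)ᴴ = Aᴴ ⊗ₖ Bᴴ := by
  ext ⟨i, j⟩ ⟨k, l⟩
  simp [Matrix.conjTranspose_apply, Matrix.kroneckerMap_apply]

lemma quasi_local {m : ℕ} (hm : 2 ≤ m) (η : Matrix (Fin m) (Fin m) ℂ)
    (hη : η.PosDef) :
    ∃ O : Matrix (Fin m) (Fin m) ℂ,
      (¬ ∃ c : ℂ, O = c • (1 : Matrix (Fin m) (Fin m) ℂ)) ∧
      η * O = Oᴴ * η := by
  have hm0 : 0 < m := by omega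
  have hdet : IsUnit η.det := hη.det_pos.ne'.isUnit
  set i0 : Fin m := ⟨0, by omega⟩
  set i1 : Fin m := ⟨1, by omega⟩
  have hne : i0 ≠ i1 := by simp [i0, i1, Fin.ext_iff]
  set H : Matrix (Fin m) (Fin m) ℂ := Matrix.single i0 i0 1 with hH
  have hHH : Hᴴ = H := by
    ext i j
    simp [hH, Matrix.conjTranspose_apply, Matrix.single, and_comm]
  have hcancel : η * (η⁻¹ * H) = H := by
    rw [← Matrix.mul_assoc, Matrix.mul_nonsing_inv _ hdet, Matrix.one_mul]
  refine ⟨η⁻¹ * H, ?_, ?_⟩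
  · rintro ⟨c, hc⟩
    have hHc : H = c • η := by
      have h2 := congrArg (fun X => η * X) hc
      simp only [hcancel, Matrix.mul_smul, Matrix.mul_one] at h2
      exact h2
    have hη11 : η i1 i1 ≠ 0 := by
      have hx := hη.dotProduct_mulVec_pos (x := Pi.single i1 1) (by
        intro h
        have := congrFun h i1
        simp at this)
      have : star (Pi.single i1 (1:ℂ)) ⬝ᵥ η *ᵥ Pi.single i1 1 = η i1 i1 := by
        simp [Matrix.mulVec_single, dotProduct, Pi.single_apply, starRingEnd_apply]
      rw [this] at hx
      exact fun h => by rw [h] at hx; exact lt_irrefl _ hx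
    have hH11 : H i1 i1 = 0 := by
      simp only [hH]
      exact Matrix.single_apply_of_row_ne hne _ _ _
    have h11 : (0:ℂ) = c * η i1 i1 := by
      rw [← hH11, hHc]; simp
    have hc0 : c = 0 := by
      rcases mul_eq_zero.mp h11.symm with h | h
      · exact h
      · exact absurd h hη11
    have hH00 : H i0 i0 = 1 := by simp [hH]
    rw [hHc, hc0] at hH00
    simp at hH00
  · have hηH : ηᴴ = η := hη.1
    have hηinvH : (η⁻¹)ᴴ = η⁻¹ := by rw [Matrix.conjTranspose_nonsing_inv, hηH]
    rw [hcancel, Matrix.conjTranspose_mul, hHH, hηinvH, Matrix.mul_assoc,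
      Matrix.nonsing_inv_mul _ hdet, Matrix.mul_one]

theorem stmt_7 (mA mB : ℕ) (hmA : 2 ≤ mA) (hmB : 2 ≤ mB)
    (ηA : Matrix (Fin mA) (Fin mA) ℂ) (ηB : Matrix (Fin mB) (Fin mB) ℂ)
    (hηA : ηA.PosDef) (hηB : ηB.PosDef) :
    ∃ (OA : Matrix (Fin mA) (Fin mA) ℂ) (OB : Matrix (Fin mB) (Fin mB) ℂ),
      (¬ ∃ c : ℂ, OA = c • (1 : Matrix (Fin mA) (Fin mA) ℂ)) ∧
      (¬ ∃ c : ℂ, OB = c • (1 : Matrix (Fin mB) (Fin mB) ℂ)) ∧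
      (ηA ⊗ₖ ηB) * (OA ⊗ₖ (1 : Matrix (Fin mB) (Fin mB) ℂ))
        = (OA ⊗ₖ (1 : Matrix (Fin mB) (Fin mB) ℂ))ᴴ * (ηA ⊗ₖ ηB) ∧
      (ηA ⊗ₖ ηB) * ((1 : Matrix (Fin mA) (Fin mA) ℂ) ⊗ₖ OB)
        = ((1 : Matrix (Fin mA) (Fin mA) ℂ) ⊗ₖ OB)ᴴ * (ηA ⊗ₖ ηB) := by
  obtain ⟨OA, hOA1, hOA2⟩ := quasi_local hmA ηA hηA
  obtain ⟨OB, hOB1, hOB2⟩ := quasi_local hmB ηB hηB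
  refine ⟨OA, OB, hOA1, hOB1, ?_, ?_⟩
  · rw [← Matrix.mul_kronecker_mul, kron_conjT, ← Matrix.mul_kronecker_mul, hOA2,
      Matrix.mul_one, Matrix.conjTranspose_one, Matrix.one_mul]
  · rw [← Matrix.mul_kronecker_mul, kron_conjT, ← Matrix.mul_kronecker_mul, hOB2,
      Matrix.mul_one, Matrix.conjTranspose_one, Matrix.one_mul]
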